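/- In the Maker-Breaker scoring positional game the same nonzugzwang property holds: for every finite hypergraph H and disjoint sets V_L, V_R of claimed vertices, Ls(H, V_L, V_R) ≥ Rs(H, V_L, V_R). -/
import Mathlib


/-- Minimax value of a scoring positional game: players alternately claim
unclaimed vertices (`turn = true` means Left/Maker to move); when all vertices
are claimed the value is given by `score VL VR`. Left maximizes, Right minimizes. -/
noncomputable def gameValue {V : Type} [Fintype V] [DecidableEq V]
    (score : Finset V → Finset V → ℤ) :
    Bool → Finset V → Finset V → ℤ := fun turn VL VR =>
  if h : (VL ∪ VR)ᶜ = (∅ : Finset V) then score VL VR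
  else
    have hne : ((VL ∪ VR)ᶜ).attach.Nonempty :=
      Finset.attach_nonempty_iff.mpr (Finset.nonempty_iff_ne_empty.mpr h)
    if turn then
      ((VL ∪ VR)ᶜ).attach.sup' hne (fun v => gameValue score false (insert v.1 VL) VR)
    else
      ((VL ∪ VR)ᶜ).attach.inf' hne (fun v => gameValue score true VL (insert v.1 VR))
termination_by turn VL VR => ((VL ∪ VR)ᶜ).card
decreasing_by
  · rw [Finset.insert_union, Finset.compl_insert]
    exact Finset.card_erase_lt_of_mem v.2
  · rw [Finset.union_insert, Finset.compl_insert]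
    exact Finset.card_erase_lt_of_mem v.2

/-- Maker-Breaker Incidence final score: number of edges of `G` both of whose
endpoints belong to Left's (Maker's) set. -/
noncomputable def mbScore {V : Type} [Fintype V] [DecidableEq V]
    (G : SimpleGraph V) (VL : Finset V) (_ : Finset V) : ℤ :=
  ({e ∈ G.edgeSet | ∀ w ∈ e, w ∈ VL} : Set (Sym2 V)).ncard

/-- Maker-Maker Incidence final score: Left's edges minus Right's edges. -/
noncomputable def mmScore {V : Type} [Fintype V] [DecidableEq V]
    (G : SimpleGraph V) (VL VR : Finset V) : ℤ :=
  (({e ∈ G.edgeSet | ∀ w ∈ e, w ∈ VL} : Set (Sym2 V)).ncard : ℤ)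
    - (({e ∈ G.edgeSet | ∀ w ∈ e, w ∈ VR} : Set (Sym2 V)).ncard : ℤ)

noncomputable def LsMB {V : Type} [Fintype V] [DecidableEq V] (G : SimpleGraph V) : ℤ :=
  gameValue (mbScore G) true ∅ ∅

noncomputable def RsMB {V : Type} [Fintype V] [DecidableEq V] (G : SimpleGraph V) : ℤ :=
  gameValue (mbScore G) false ∅ ∅

noncomputable def LsMM {V : Type} [Fintype V] [DecidableEq V] (G : SimpleGraph V) : ℤ :=
  gameValue (mmScore G) true ∅ ∅

noncomputable def RsMM {V : Type} [Fintype V] [DecidableEq V] (G : SimpleGraph V) : ℤ :=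
  gameValue (mmScore G) false ∅ ∅

/-- Maker-Breaker final score on a hypergraph with edge set `E`. -/
def mbScoreH {V : Type} [Fintype V] [DecidableEq V]
    (E : Finset (Finset V)) (VL : Finset V) (_ : Finset V) : ℤ :=
  ((E.filter (fun e => e ⊆ VL)).card : ℤ)

/-- Maker-Maker final score on a hypergraph with edge set `E`. -/
def mmScoreH {V : Type} [Fintype V] [DecidableEq V]
    (E : Finset (Finset V)) (VL VR : Finset V) : ℤ :=
  ((E.filter (fun e => e ⊆ VL)).card : ℤ) - ((E.filter (fun e => e ⊆ VR)).card : ℤ)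

lemma gameValue_terminal {V : Type} [Fintype V] [DecidableEq V]
    (score : Finset V → Finset V → ℤ) (turn : Bool) (VL VR : Finset V)
    (h : (VL ∪ VR)ᶜ = (∅ : Finset V)) :
    gameValue score turn VL VR = score VL VR := by
  rw [gameValue, dif_pos h]

lemma gameValue_true {V : Type} [Fintype V] [DecidableEq V]
    (score : Finset V → Finset V → ℤ) (VL VR : Finset V)
    (h : (VL ∪ VR)ᶜ ≠ (∅ : Finset V)) :
    gameValue score true VL VR =
      ((VL ∪ VR)ᶜ).attach.sup'
        (Finset.attach_nonempty_iff.mpr (Finset.nonempty_iff_ne_empty.mpr h))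
        (fun v => gameValue score false (insert v.1 VL) VR) := by
  rw [gameValue, dif_neg h]; rfl

lemma gameValue_false {V : Type} [Fintype V] [DecidableEq V]
    (score : Finset V → Finset V → ℤ) (VL VR : Finset V)
    (h : (VL ∪ VR)ᶜ ≠ (∅ : Finset V)) :
    gameValue score false VL VR =
      ((VL ∪ VR)ᶜ).attach.inf'
        (Finset.attach_nonempty_iff.mpr (Finset.nonempty_iff_ne_empty.mpr h))
        (fun v => gameValue score true VL (insert v.1 VR)) := by
  rw [gameValue, dif_neg h]; rfl

lemma le_gameValue_true {V : Type} [Fintype V] [DecidableEq V]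
    (score : Finset V → Finset V → ℤ) (VL VR : Finset V)
    (h : (VL ∪ VR)ᶜ ≠ (∅ : Finset V)) (v : V) (hv : v ∈ (VL ∪ VR)ᶜ) :
    gameValue score false (insert v VL) VR ≤ gameValue score true VL VR := by
  rw [gameValue_true _ _ _ h]
  have := Finset.le_sup' (f := fun u : {x // x ∈ (VL ∪ VR)ᶜ} => gameValue score false (insert u.1 VL) VR)
    (Finset.mem_attach _ ⟨v, hv⟩)
  exact this

lemma gameValue_false_le {V : Type} [Fintype V] [DecidableEq V]
    (score : Finset V → Finset V → ℤ) (VL VR : Finset V)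
    (h : (VL ∪ VR)ᶜ ≠ (∅ : Finset V)) (v : V) (hv : v ∈ (VL ∪ VR)ᶜ) :
    gameValue score false VL VR ≤ gameValue score true VL (insert v VR) := by
  rw [gameValue_false _ _ _ h]
  have := Finset.inf'_le (f := fun u : {x // x ∈ (VL ∪ VR)ᶜ} => gameValue score true VL (insert u.1 VR))
    (Finset.mem_attach _ ⟨v, hv⟩)
  exact this

lemma gameValue_true_le {V : Type} [Fintype V] [DecidableEq V]
    (score : Finset V → Finset V → ℤ) (VL VR : Finset V)
    (h : (VL ∪ VR)ᶜ ≠ (∅ : Finset V)) (a : ℤ)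
    (H : ∀ v ∈ (VL ∪ VR)ᶜ, gameValue score false (insert v VL) VR ≤ a) :
    gameValue score true VL VR ≤ a := by
  rw [gameValue_true _ _ _ h]
  have := Finset.sup'_le (f := fun u : {x // x ∈ (VL ∪ VR)ᶜ} => gameValue score false (insert u.1 VL) VR)
    (Finset.attach_nonempty_iff.mpr (Finset.nonempty_iff_ne_empty.mpr h)) (a := a)
    (fun u _ => H u.1 u.2)
  exact this

lemma le_gameValue_false {V : Type} [Fintype V] [DecidableEq V]
    (score : Finset V → Finset V → ℤ) (VL VR : Finset V)
    (h : (VL ∪ VR)ᶜ ≠ (∅ : Finset V)) (a : ℤ)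
    (H : ∀ v ∈ (VL ∪ VR)ᶜ, a ≤ gameValue score true VL (insert v VR)) :
    a ≤ gameValue score false VL VR := by
  rw [gameValue_false _ _ _ h]
  have := Finset.le_inf' (f := fun u : {x // x ∈ (VL ∪ VR)ᶜ} => gameValue score true VL (insert u.1 VR))
    (Finset.attach_nonempty_iff.mpr (Finset.nonempty_iff_ne_empty.mpr h)) (a := a)
    (fun u _ => H u.1 u.2)
  exact this

lemma mbScoreH_mono {V : Type} [Fintype V] [DecidableEq V] (E : Finset (Finset V))
    {VL VL' : Finset V} (h : VL ⊆ VL') (VR VR' : Finset V) :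
    mbScoreH E VL VR ≤ mbScoreH E VL' VR' := by
  have hsub : E.filter (fun e => e ⊆ VL) ⊆ E.filter (fun e => e ⊆ VL') := by
    intro e he
    simp only [Finset.mem_filter] at *
    exact ⟨he.1, he.2.trans h⟩
  unfold mbScoreH
  exact_mod_cast Finset.card_le_card hsub

lemma key {V : Type} [Fintype V] [DecidableEq V] (E : Finset (Finset V)) :
    ∀ n : ℕ,
      (∀ VL VR : Finset V, ((VL ∪ VR)ᶜ).card = n →
        gameValue (mbScoreH E) false VL VR ≤ gameValue (mbScoreH E) true VL VR) ∧
      (∀ (b : Bool) (VL VR : Finset V) (v : V), v ∈ (VL ∪ VR)ᶜ →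
        ((VL ∪ VR)ᶜ).card = n + 1 →
        gameValue (mbScoreH E) b VL VR ≤ gameValue (mbScoreH E) b (insert v VL) VR) := by
  intro n
  induction n using Nat.strong_induction_on with
  | _ n IH =>
  have compl_ins : ∀ (VL VR : Finset V) (v : V),
      ((insert v VL) ∪ VR)ᶜ = ((VL ∪ VR)ᶜ).erase v := by
    intro VL VR v; rw [Finset.insert_union, Finset.compl_insert]
  have compl_insR : ∀ (VL VR : Finset V) (v : V),
      (VL ∪ insert v VR)ᶜ = ((VL ∪ VR)ᶜ).erase v := by
    intro VL VR v; rw [Finset.union_insert, Finset.compl_insert]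
  have hT : ∀ VL VR : Finset V, ((VL ∪ VR)ᶜ).card = n →
      gameValue (mbScoreH E) false VL VR ≤ gameValue (mbScoreH E) true VL VR := by
    intro VL VR hcard
    rcases Nat.eq_zero_or_pos n with hn | hn
    · have h0 : (VL ∪ VR)ᶜ = ∅ := Finset.card_eq_zero.mp (by omega)
      rw [gameValue_terminal _ _ _ _ h0, gameValue_terminal _ _ _ _ h0]
    · have hne : (VL ∪ VR)ᶜ ≠ ∅ := by
        intro h0; rw [h0] at hcard; simp at hcard; omega
      obtain ⟨w0, hw0⟩ := Finset.nonempty_iff_ne_empty.mpr hne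
      have hC := (IH (n-1) (by omega)).2 false VL VR w0 hw0 (by omega)
      exact hC.trans (le_gameValue_true _ VL VR hne w0 hw0)
  refine ⟨hT, ?_⟩
  intro b VL VR v hv hcard
  have hGne : (VL ∪ VR)ᶜ ≠ ∅ := fun h0 => by simp [h0] at hv
  have hFeq : ((insert v VL) ∪ VR)ᶜ = ((VL ∪ VR)ᶜ).erase v := compl_ins VL VR v
  have hFcard : (((insert v VL) ∪ VR)ᶜ).card = n := by
    rw [hFeq, Finset.card_erase_of_mem hv, hcard]
    omega
  cases b with
  | true =>
    apply gameValue_true_le _ VL VR hGne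
    intro w hw
    by_cases hwv : w = v
    · subst hwv
      exact hT (insert w VL) VR hFcard
    · have hn1 : 1 ≤ n := by
        have h2 : 1 < ((VL ∪ VR)ᶜ).card :=
          Finset.one_lt_card.mpr ⟨w, hw, v, hv, hwv⟩
        omega
      have hvmem : v ∈ ((insert w VL) ∪ VR)ᶜ := by
        rw [compl_ins]; exact Finset.mem_erase.mpr ⟨fun h => hwv h.symm, hv⟩
      have hcard' : (((insert w VL) ∪ VR)ᶜ).card = (n-1) + 1 := by
        rw [compl_ins, Finset.card_erase_of_mem hw, hcard]; omega
      have h1 := (IH (n-1) (by omega)).2 false (insert w VL) VR v hvmem hcard'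
      rw [Finset.insert_comm] at h1
      have hFne : ((insert v VL) ∪ VR)ᶜ ≠ ∅ := by
        intro h0; rw [h0] at hFcard; simp at hFcard; omega
      have hwF : w ∈ ((insert v VL) ∪ VR)ᶜ := by
        rw [hFeq]; exact Finset.mem_erase.mpr ⟨hwv, hw⟩
      exact h1.trans (le_gameValue_true _ (insert v VL) VR hFne w hwF)
  | false =>
    rcases Nat.eq_zero_or_pos n with hn | hn
    · have hF0 : ((insert v VL) ∪ VR)ᶜ = ∅ := Finset.card_eq_zero.mp (by omega)
      have herase : ((VL ∪ VR)ᶜ).erase v = ∅ := by rw [← hFeq]; exact hF0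
      have hterm : (VL ∪ insert v VR)ᶜ = ∅ := by rw [compl_insR, herase]
      rw [gameValue_terminal _ _ _ _ hF0]
      refine (gameValue_false_le _ VL VR hGne v hv).trans ?_
      rw [gameValue_terminal _ _ _ _ hterm]
      exact mbScoreH_mono E (Finset.subset_insert v VL) _ _
    · have hFne : ((insert v VL) ∪ VR)ᶜ ≠ ∅ := by
        intro h0; rw [h0] at hFcard; simp at hFcard; omega
      apply le_gameValue_false _ (insert v VL) VR hFne
      intro w hwF
      have hwe := Finset.mem_erase.mp (hFeq ▸ hwF)
      have hw : w ∈ (VL ∪ VR)ᶜ := hwe.2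
      have hwv : w ≠ v := hwe.1
      have step1 := gameValue_false_le (mbScoreH E) VL VR hGne w hw
      refine step1.trans ?_
      have hvmem : v ∈ (VL ∪ insert w VR)ᶜ := by
        rw [compl_insR]; exact Finset.mem_erase.mpr ⟨fun h => hwv h.symm, hv⟩
      have hcard' : ((VL ∪ insert w VR)ᶜ).card = (n-1) + 1 := by
        rw [compl_insR, Finset.card_erase_of_mem hw, hcard]; omega
      exact (IH (n-1) (by omega)).2 true VL (insert w VR) v hvmem hcard'


/-- The Maker-Breaker scoring positional game is nonzugzwang:
in every position, the value with Left to move is at least the value with Right to move. -/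
theorem makerBreaker_scoring_game_nonzugzwang {V : Type} [Fintype V] [DecidableEq V]
    (E : Finset (Finset V)) (VL VR : Finset V) (hdisj : Disjoint VL VR) :
    gameValue (mbScoreH E) false VL VR ≤ gameValue (mbScoreH E) true VL VR := by
  exact (key E ((VL ∪ VR)ᶜ).card).1 VL VR rfl
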